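/- Let Γ = diag(σ_1²,…,σ_n²) with σ_1 ≥ ⋯ ≥ σ_n ≥ 0 and σ_p > σ_{p+1}. For every q ∈ {1,…,p}, the maximum of s_q(XᵀΓX) over X ∈ St(n,p) equals e_q(σ_1²,…,σ_p²), attained when range(X) is the span of the first p standard basis vectors. -/

import Mathlib

open Matrix

open Polynomial

/-- `symPoly q B` is the `q`-th elementary symmetric polynomial of the eigenvalues of
the symmetric matrix `B`. -/
noncomputable def symPoly {p : ℕ} (q : ℕ) (B : Matrix (Fin p) (Fin p) ℝ) : ℝ :=
  if h : B.IsHermitian then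
    ∑ s ∈ Finset.univ.powersetCard q, ∏ i ∈ s, h.eigenvalues i
  else 0


-- quadratic form lemmas
lemma quad_eq {n p : ℕ} (A : Matrix (Fin n) (Fin p) ℝ) (M : Matrix (Fin n) (Fin n) ℝ)
    (u : Fin p → ℝ) :
    u ⬝ᵥ ((Aᵀ * M * A) *ᵥ u) = (A *ᵥ u) ⬝ᵥ (M *ᵥ (A *ᵥ u)) := by
  rw [← mulVec_mulVec, ← mulVec_mulVec, Matrix.dotProduct_mulVec, vecMul_transpose]

lemma quad_diag {N : ℕ} (d v : Fin N → ℝ) :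
    v ⬝ᵥ (diagonal d *ᵥ v) = ∑ j, d j * v j ^ 2 := by
  simp only [dotProduct, mulVec_diagonal]
  exact Finset.sum_congr rfl fun j _ => by ring

lemma norm_eq {n p : ℕ} (A : Matrix (Fin n) (Fin p) ℝ) (hA : Aᵀ * A = 1) (u : Fin p → ℝ) :
    (A *ᵥ u) ⬝ᵥ (A *ᵥ u) = u ⬝ᵥ u := by
  have := quad_eq A 1 u
  rw [Matrix.mul_one, hA, one_mulVec, one_mulVec] at this
  exact this.symm

-- eigen-side representation: r(u) = w' ⬝ᵥ D w', with w' = Vᵀ u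
lemma spectral_quad {p : ℕ} (B : Matrix (Fin p) (Fin p) ℝ) (hB : B.IsHermitian) (u : Fin p → ℝ) :
    u ⬝ᵥ (B *ᵥ u) =
      ∑ j, hB.eigenvalues j * (((hB.eigenvectorUnitary : Matrix (Fin p) (Fin p) ℝ)ᵀ *ᵥ u) j) ^ 2 := by
  set V : Matrix (Fin p) (Fin p) ℝ := (hB.eigenvectorUnitary : Matrix (Fin p) (Fin p) ℝ) with hV
  have hst : star V = Vᵀ := rfl
  have hdiag : diagonal ((RCLike.ofReal : ℝ → ℝ) ∘ hB.eigenvalues) = diagonal hB.eigenvalues := by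
    congr 1
  have hB' : B = (Vᵀ)ᵀ * diagonal hB.eigenvalues * Vᵀ := by
    rw [transpose_transpose, ← hst, ← hdiag]; exact hB.spectral_theorem
  conv_lhs => rw [hB']
  rw [quad_eq, quad_diag]

lemma Vt_norm {p : ℕ} (B : Matrix (Fin p) (Fin p) ℝ) (hB : B.IsHermitian) (u : Fin p → ℝ) :
    ((hB.eigenvectorUnitary : Matrix (Fin p) (Fin p) ℝ)ᵀ *ᵥ u) ⬝ᵥ
      ((hB.eigenvectorUnitary : Matrix (Fin p) (Fin p) ℝ)ᵀ *ᵥ u) = u ⬝ᵥ u := by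
  apply norm_eq
  rw [transpose_transpose]
  have : (hB.eigenvectorUnitary : Matrix (Fin p) (Fin p) ℝ) * star (hB.eigenvectorUnitary : Matrix (Fin p) (Fin p) ℝ) = 1 :=
    Unitary.mul_star_self_of_mem hB.eigenvectorUnitary.2
  exact this

lemma eig_nonneg {n p : ℕ} (σ : Fin n → ℝ) (X : Matrix (Fin n) (Fin p) ℝ)
    (hB : (Xᵀ * Matrix.diagonal (fun i => σ i ^ 2) * X).IsHermitian) (j : Fin p) :
    0 ≤ hB.eigenvalues j := by
  set B := Xᵀ * Matrix.diagonal (fun i => σ i ^ 2) * X with hBdef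
  set V : Matrix (Fin p) (Fin p) ℝ := (hB.eigenvectorUnitary : Matrix (Fin p) (Fin p) ℝ)
  set u : Fin p → ℝ := V *ᵥ Pi.single j 1 with hu
  have hVV : Vᵀ * V = 1 := Unitary.star_mul_self_of_mem hB.eigenvectorUnitary.2
  have h1 : Vᵀ *ᵥ u = Pi.single j 1 := by
    rw [hu, mulVec_mulVec, hVV, one_mulVec]
  have hq := spectral_quad B hB u
  rw [h1] at hq
  have hRHS : ∑ j', hB.eigenvalues j' * ((Pi.single j 1 : Fin p → ℝ) j') ^ 2 = hB.eigenvalues j := by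
    simp [Pi.single_apply]
  rw [hRHS] at hq
  rw [← hq, hBdef, quad_eq, quad_diag]
  exact Finset.sum_nonneg fun i _ => mul_nonneg (sq_nonneg _) (sq_nonneg _)

lemma eig_le {n p : ℕ} (hpn : p ≤ n) (σ : Fin n → ℝ)
    (hmono : ∀ i j : Fin n, i ≤ j → σ j ≤ σ i) (hσ0 : ∀ i, 0 ≤ σ i)
    (X : Matrix (Fin n) (Fin p) ℝ) (hX : Xᵀ * X = 1)
    (hB : (Xᵀ * Matrix.diagonal (fun i => σ i ^ 2) * X).IsHermitian) (k : Fin p) :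
    hB.eigenvalues (Tuple.sort hB.eigenvalues k) ≤ σ (Fin.castLE hpn k.rev) ^ 2 := by
  set B := Xᵀ * Matrix.diagonal (fun i => σ i ^ 2) * X with hBdef
  set lam := hB.eigenvalues with hlam
  set τ := Tuple.sort lam with hτ
  set V : Matrix (Fin p) (Fin p) ℝ := (hB.eigenvectorUnitary : Matrix (Fin p) (Fin p) ℝ) with hVdef
  have hmp : (k.rev : ℕ) < p := k.rev.isLt
  have hmn : (k.rev : ℕ) ≤ n := le_of_lt (lt_of_lt_of_le hmp hpn)
  have hmval : (k.rev : ℕ) = p - (k.val + 1) := Fin.val_rev k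
  set L₁ : (Fin p → ℝ) →ₗ[ℝ] (Fin (k.rev : ℕ) → ℝ) :=
    (LinearMap.funLeft ℝ ℝ (fun a : Fin (k.rev : ℕ) => Fin.castLE hmn a)).comp X.mulVecLin with hL₁
  set L₂ : (Fin p → ℝ) →ₗ[ℝ] (Fin (k : ℕ) → ℝ) :=
    (LinearMap.funLeft ℝ ℝ (fun a : Fin (k : ℕ) => τ (Fin.castLE (le_of_lt k.isLt) a))).comp
      (Vᵀ).mulVecLin with hL₂
  have hd₁ : p ≤ (k.rev : ℕ) + Module.finrank ℝ (LinearMap.ker L₁) := by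
    have h := LinearMap.finrank_range_add_finrank_ker L₁
    rw [Module.finrank_fintype_fun_eq_card, Fintype.card_fin] at h
    have h2 : Module.finrank ℝ (LinearMap.range L₁) ≤ (k.rev : ℕ) := by
      have := Submodule.finrank_le (LinearMap.range L₁)
      rwa [Module.finrank_fintype_fun_eq_card, Fintype.card_fin] at this
    omega
  have hd₂ : p ≤ (k : ℕ) + Module.finrank ℝ (LinearMap.ker L₂) := by
    have h := LinearMap.finrank_range_add_finrank_ker L₂
    rw [Module.finrank_fintype_fun_eq_card, Fintype.card_fin] at h
    have h2 : Module.finrank ℝ (LinearMap.range L₂) ≤ (k : ℕ) := by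
      have := Submodule.finrank_le (LinearMap.range L₂)
      rwa [Module.finrank_fintype_fun_eq_card, Fintype.card_fin] at this
    omega
  have hnd : ¬ Disjoint (LinearMap.ker L₂) (LinearMap.ker L₁) := by
    intro h
    have h3 := Submodule.finrank_add_finrank_le_of_disjoint h
    rw [Module.finrank_fintype_fun_eq_card, Fintype.card_fin] at h3
    have hk : (k : ℕ) < p := k.isLt
    omega
  rw [Submodule.disjoint_def] at hnd
  push_neg at hnd
  obtain ⟨u, hu₂, hu₁, hu0⟩ := hnd
  have hupos : 0 < u ⬝ᵥ u := by
    rcases lt_or_eq_of_le (Finset.sum_nonneg fun i (_ : i ∈ Finset.univ) => mul_self_nonneg (u i)) with h | h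
    · exact h
    · exact absurd ((dotProduct_self_eq_zero).mp h.symm) hu0
  have hw1 : ∀ a : Fin (k.rev : ℕ), (X *ᵥ u) (Fin.castLE hmn a) = 0 := by
    intro a
    have h0 := LinearMap.mem_ker.mp hu₁
    have := congrFun h0 a
    simpa [hL₁, Matrix.mulVecLin_apply] using this
  have hw2 : ∀ a : Fin (k : ℕ), (Vᵀ *ᵥ u) (τ (Fin.castLE (le_of_lt k.isLt) a)) = 0 := by
    intro a
    have h0 := LinearMap.mem_ker.mp hu₂
    have := congrFun h0 a
    simpa [hL₂, Matrix.mulVecLin_apply, Matrix.mulVec_transpose] using this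
  have hub : u ⬝ᵥ (B *ᵥ u) ≤ σ (Fin.castLE hpn k.rev) ^ 2 * (u ⬝ᵥ u) := by
    rw [hBdef, quad_eq, quad_diag, ← norm_eq X hX u]
    have hnorm : (X *ᵥ u) ⬝ᵥ (X *ᵥ u) = ∑ j, (X *ᵥ u) j ^ 2 := by
      simp [dotProduct, sq]
    rw [hnorm, Finset.mul_sum]
    apply Finset.sum_le_sum
    intro j _
    by_cases hj : (j : ℕ) < (k.rev : ℕ)
    · have hz : (X *ᵥ u) j = 0 := by
        have := hw1 ⟨j, hj⟩
        rwa [show Fin.castLE hmn ⟨j, hj⟩ = j from Fin.ext rfl] at this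
      rw [hz]
      simp
    · have hj' : (k.rev : ℕ) ≤ (j : ℕ) := le_of_not_gt hj
      have hle : Fin.castLE hpn k.rev ≤ j := by
        rw [Fin.le_def]
        simpa using hj'
      have h1 : σ j ≤ σ (Fin.castLE hpn k.rev) := hmono _ _ hle
      have h2 : σ j ^ 2 ≤ σ (Fin.castLE hpn k.rev) ^ 2 := pow_le_pow_left₀ (hσ0 j) h1 2
      exact mul_le_mul_of_nonneg_right h2 (sq_nonneg _)
  have hlb : lam (τ k) * (u ⬝ᵥ u) ≤ u ⬝ᵥ (B *ᵥ u) := by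
    rw [spectral_quad B hB u, ← Vt_norm B hB u]
    have hnorm : (Vᵀ *ᵥ u) ⬝ᵥ (Vᵀ *ᵥ u) = ∑ j, (Vᵀ *ᵥ u) j ^ 2 := by
      simp [dotProduct, sq]
    rw [hnorm, Finset.mul_sum]
    rw [← Equiv.sum_comp τ (fun j => lam j * (Vᵀ *ᵥ u) j ^ 2),
        ← Equiv.sum_comp τ (fun j => lam (τ k) * (Vᵀ *ᵥ u) j ^ 2)]
    apply Finset.sum_le_sum
    intro j _
    show lam (τ k) * (Vᵀ *ᵥ u) (τ j) ^ 2 ≤ lam (τ j) * (Vᵀ *ᵥ u) (τ j) ^ 2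
    by_cases hj : k ≤ j
    · have hmono' : lam (τ k) ≤ lam (τ j) := Tuple.monotone_sort lam hj
      exact mul_le_mul_of_nonneg_right hmono' (sq_nonneg _)
    · have hjk : (j : ℕ) < (k : ℕ) := Fin.lt_def.mp (lt_of_not_ge hj)
      have hz : (Vᵀ *ᵥ u) (τ j) = 0 := by
        have := hw2 ⟨j, hjk⟩
        rwa [show Fin.castLE (le_of_lt k.isLt) ⟨j, hjk⟩ = j from Fin.ext rfl] at this
      rw [hz]
      simp
  have hfin := le_trans hlb hub
  exact le_of_mul_le_mul_right hfin hupos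

theorem charpoly_conj {p : ℕ} (U A : Matrix (Fin p) (Fin p) ℝ) (h1 : U * Uᵀ = 1)
    (h2 : Uᵀ * U = 1) : (Uᵀ * A * U).charpoly = A.charpoly := by
  unfold Matrix.charpoly
  have hd : (diagonal fun _ : Fin p => (X:ℝ[X])) = (X:ℝ[X]) • (1 : Matrix (Fin p) (Fin p) ℝ[X]) := by
    rw [smul_one_eq_diagonal]
  have key : charmatrix (Uᵀ * A * U) = (Uᵀ).map C * charmatrix A * U.map C := by
    unfold charmatrix
    rw [Matrix.mul_sub, Matrix.sub_mul]
    congr 1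
    · rw [scalar_apply, hd, Matrix.mul_smul, smul_mul_assoc, Matrix.mul_one, ← Matrix.map_mul, h2]
      simp
    · simp only [RingHom.mapMatrix_apply, ← Matrix.map_mul]
  rw [key, det_mul, det_mul, mul_comm, ← mul_assoc, ← det_mul, ← Matrix.map_mul, h1]
  simp

theorem charpoly_diag {p : ℕ} (d : Fin p → ℝ) :
    (diagonal d).charpoly = ∏ i, (X - C (d i)) := by
  unfold Matrix.charpoly
  have h : charmatrix (diagonal d) = diagonal fun i => (X - C (d i)) := by
    unfold charmatrix
    rw [scalar_apply]
    ext i j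
    by_cases h : i = j <;> simp [h, diagonal_apply_ne, Matrix.diagonal_map]
  rw [h, det_diagonal]

theorem herm_charpoly {p : ℕ} (B : Matrix (Fin p) (Fin p) ℝ) (hB : B.IsHermitian) :
    B.charpoly = ∏ i, (X - C (hB.eigenvalues i)) := by
  set V : Matrix (Fin p) (Fin p) ℝ := (hB.eigenvectorUnitary : Matrix (Fin p) (Fin p) ℝ) with hV
  have hst : star V = Vᵀ := rfl
  have h1 : Vᵀ * V = 1 := by rw [← hst]; exact Unitary.star_mul_self_of_mem hB.eigenvectorUnitary.2
  have h2 : V * Vᵀ = 1 := by rw [← hst]; exact Unitary.mul_star_self_of_mem hB.eigenvectorUnitary.2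
  have hdiag : diagonal ((RCLike.ofReal : ℝ → ℝ) ∘ hB.eigenvalues) = diagonal hB.eigenvalues := by
    congr 1
  have hB' : B = (Vᵀ)ᵀ * diagonal hB.eigenvalues * Vᵀ := by
    rw [transpose_transpose, ← hst, ← hdiag]; exact hB.spectral_theorem
  conv_lhs => rw [hB']
  rw [charpoly_conj _ _ (by simpa using h1) (by simpa using h2), charpoly_diag]

lemma symPoly_of_charpoly {p q : ℕ} (B : Matrix (Fin p) (Fin p) ℝ) (hB : B.IsHermitian)
    (d : Fin p → ℝ) (h : B.charpoly = ∏ i, (X - C (d i))) :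
    symPoly q B = ∑ s ∈ (Finset.univ : Finset (Fin p)).powersetCard q, ∏ i ∈ s, d i := by
  rw [symPoly, dif_pos hB, ← Finset.esymm_map_val, ← Finset.esymm_map_val]
  congr 1
  have e1 : B.charpoly = ((Finset.univ.val.map hB.eigenvalues).map fun r => X - C r).prod := by
    rw [herm_charpoly B hB, Finset.prod_eq_multiset_prod, Multiset.map_map]
    rfl
  have e2 : B.charpoly = ((Finset.univ.val.map d).map fun r => X - C r).prod := by
    rw [h, Finset.prod_eq_multiset_prod, Multiset.map_map]
    rfl
  have := congrArg Polynomial.roots (e1.symm.trans e2)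
  rwa [Polynomial.roots_multiset_prod_X_sub_C, Polynomial.roots_multiset_prod_X_sub_C] at this

lemma sum_perm_reindex {p q : ℕ} (f : Fin p → ℝ) (e : Equiv.Perm (Fin p)) :
    ∑ s ∈ (Finset.univ : Finset (Fin p)).powersetCard q, ∏ i ∈ s, f (e i)
      = ∑ s ∈ (Finset.univ : Finset (Fin p)).powersetCard q, ∏ i ∈ s, f i := by
  rw [← Finset.esymm_map_val (fun i => f (e i)) Finset.univ q, ← Finset.esymm_map_val f Finset.univ q]
  congr 1
  have h1 : (Finset.univ : Finset (Fin p)).val.map (fun i => f (e i))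
      = ((Finset.univ : Finset (Fin p)).val.map e).map f := by
    rw [Multiset.map_map]; rfl
  rw [h1]
  congr 1
  have := congrArg Finset.val (Finset.map_univ_equiv e)
  simpa [Finset.map_val] using this

theorem stmt_15 {n p : ℕ} (hpn : p ≤ n) (hp : 0 < p) (σ : Fin n → ℝ)
    (hmono : ∀ i j : Fin n, i ≤ j → σ j ≤ σ i) (hσ0 : ∀ i, 0 ≤ σ i)
    (i₁ i₂ : Fin n) (hi₁ : (i₁ : ℕ) = p - 1) (hi₂ : (i₂ : ℕ) = p)
    (hgap : σ i₂ < σ i₁)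
    (Γ : Matrix (Fin n) (Fin n) ℝ) (hΓ : Γ = Matrix.diagonal fun i => σ i ^ 2)
    (q : ℕ) (hq1 : 1 ≤ q) (hqp : q ≤ p) :
    (∀ X : Matrix (Fin n) (Fin p) ℝ, Xᵀ * X = 1 →
        symPoly q (Xᵀ * Γ * X)
          ≤ ∑ s ∈ (Finset.univ : Finset (Fin p)).powersetCard q,
              ∏ i ∈ s, σ (Fin.castLE hpn i) ^ 2)
    ∧ (∀ X : Matrix (Fin n) (Fin p) ℝ, Xᵀ * X = 1 →
        LinearMap.range X.mulVecLin
            = Submodule.span ℝ (Set.range fun i : Fin p =>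
                (Pi.single (Fin.castLE hpn i) 1 : Fin n → ℝ)) →
        symPoly q (Xᵀ * Γ * X)
          = ∑ s ∈ (Finset.univ : Finset (Fin p)).powersetCard q,
              ∏ i ∈ s, σ (Fin.castLE hpn i) ^ 2) := by
  subst hΓ
  have hXH : ∀ X : Matrix (Fin n) (Fin p) ℝ, (Xᵀ)ᴴ = X := by
    intro X; ext i j; simp [conjTranspose_apply]
  have hherm : ∀ X : Matrix (Fin n) (Fin p) ℝ,
      (Xᵀ * Matrix.diagonal (fun i => σ i ^ 2) * X).IsHermitian := by
    intro X
    have h := isHermitian_mul_mul_conjTranspose Xᵀ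
      (isHermitian_diagonal (fun i => σ i ^ 2))
    rwa [hXH] at h
  constructor
  · intro X hX
    have hB := hherm X
    set lam := hB.eigenvalues with hlam
    set τ := Tuple.sort lam with hτ
    calc symPoly q (Xᵀ * Matrix.diagonal (fun i => σ i ^ 2) * X)
        = ∑ s ∈ (Finset.univ : Finset (Fin p)).powersetCard q, ∏ i ∈ s, lam i := by
          rw [symPoly, dif_pos hB]
      _ = ∑ s ∈ (Finset.univ : Finset (Fin p)).powersetCard q, ∏ i ∈ s, lam (τ i) :=
          (sum_perm_reindex lam τ).symm
      _ ≤ ∑ s ∈ (Finset.univ : Finset (Fin p)).powersetCard q,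
            ∏ i ∈ s, σ (Fin.castLE hpn i.rev) ^ 2 := by
          apply Finset.sum_le_sum
          intro s _
          apply Finset.prod_le_prod
          · intro i _; exact eig_nonneg σ X hB (τ i)
          · intro i _; exact eig_le hpn σ hmono hσ0 X hX hB i
      _ = ∑ s ∈ (Finset.univ : Finset (Fin p)).powersetCard q,
            ∏ i ∈ s, σ (Fin.castLE hpn i) ^ 2 := by
          have := sum_perm_reindex (q := q) (fun i : Fin p => σ (Fin.castLE hpn i) ^ 2) Fin.revPerm
          simpa using this
  · intro X hX hrange
    have hB := hherm X
    set E : Matrix (Fin n) (Fin p) ℝ :=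
      Matrix.of fun (j : Fin n) (i : Fin p) => if j = Fin.castLE hpn i then (1:ℝ) else 0 with hE
    have ha : Eᵀ * E = 1 := by
      ext i i'
      simp only [Matrix.mul_apply, transpose_apply, hE, Matrix.of_apply, one_apply,
        ite_mul, mul_ite, one_mul, zero_mul, mul_one, mul_zero]
      rw [Finset.sum_ite_eq' Finset.univ (Fin.castLE hpn i')
        (fun j => if j = Fin.castLE hpn i then (1:ℝ) else 0)]
      simp only [Finset.mem_univ, if_true]
      by_cases h : i = i' <;> simp [h, Fin.castLE_inj, eq_comm]
    have hb : Eᵀ * (Matrix.diagonal fun i => σ i ^ 2) * E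
        = Matrix.diagonal (fun i : Fin p => σ (Fin.castLE hpn i) ^ 2) := by
      have hDE : (Matrix.diagonal fun i => σ i ^ 2) * E
          = Matrix.of fun (j : Fin n) (i : Fin p) =>
              if j = Fin.castLE hpn i then σ j ^ 2 else 0 := by
        ext j i
        rw [Matrix.diagonal_mul]
        simp [hE]
      rw [Matrix.mul_assoc, hDE]
      ext i i'
      simp only [Matrix.mul_apply, transpose_apply, Matrix.of_apply, diagonal_apply, hE,
        ite_mul, mul_ite, one_mul, zero_mul, mul_one, mul_zero]
      rw [Finset.sum_ite_eq' Finset.univ (Fin.castLE hpn i')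
        (fun j => if j = Fin.castLE hpn i then σ j ^ 2 else 0)]
      simp only [Finset.mem_univ, if_true]
      by_cases h : i = i' <;> simp [h, Fin.castLE_inj, eq_comm]
    have hspan : Submodule.span ℝ (Set.range fun i : Fin p =>
        (Pi.single (Fin.castLE hpn i) 1 : Fin n → ℝ)) = LinearMap.range E.mulVecLin := by
      rw [Matrix.range_mulVecLin]
      congr 1
      have hfun : (fun i : Fin p => (Pi.single (Fin.castLE hpn i) 1 : Fin n → ℝ)) = Eᵀ := by
        funext i j
        simp [hE, Pi.single_apply]
      rw [hfun]
      rfl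
    have hPE : E * Eᵀ * E = E := by rw [Matrix.mul_assoc, ha, Matrix.mul_one]
    have hPX : E * Eᵀ * X = X := by
      ext j c
      have hcol : X *ᵥ Pi.single c 1 ∈ LinearMap.range X.mulVecLin := ⟨Pi.single c 1, rfl⟩
      rw [hrange, hspan] at hcol
      obtain ⟨y, hy⟩ := hcol
      have hy' : E *ᵥ y = X *ᵥ Pi.single c 1 := hy
      have hXc : X *ᵥ Pi.single c 1 = fun r => X r c := by
        funext r
        simp [Matrix.mulVec_single]
      have h1 : (E * Eᵀ * X) j c = ((E * Eᵀ) *ᵥ (X *ᵥ Pi.single c 1)) j := by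
        rw [hXc]
        simp [Matrix.mul_apply, Matrix.mulVec, dotProduct]
      rw [h1, ← hy', Matrix.mulVec_mulVec, hPE, hy', hXc]
    set U : Matrix (Fin p) (Fin p) ℝ := Eᵀ * X with hU
    have hXEU : E * U = X := by rw [hU, ← Matrix.mul_assoc, hPX]
    have hUt : Uᵀ = Xᵀ * E := by rw [hU, transpose_mul, transpose_transpose]
    have hUtU : Uᵀ * U = 1 := by
      calc Uᵀ * U = Xᵀ * E * (Eᵀ * X) := by rw [hUt]
        _ = Xᵀ * (E * Eᵀ * X) := by rw [Matrix.mul_assoc, Matrix.mul_assoc]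
        _ = Xᵀ * X := by rw [hPX]
        _ = 1 := hX
    have hUUt : U * Uᵀ = 1 := mul_eq_one_comm.mp hUtU
    have hconj : Xᵀ * (Matrix.diagonal fun i => σ i ^ 2) * X
        = Uᵀ * (Eᵀ * (Matrix.diagonal fun i => σ i ^ 2) * E) * U := by
      rw [← hXEU]
      simp only [transpose_mul, Matrix.mul_assoc]
    have hcharB : (Xᵀ * (Matrix.diagonal fun i => σ i ^ 2) * X).charpoly
        = ∏ i : Fin p, (Polynomial.X - C (σ (Fin.castLE hpn i) ^ 2)) := by
      rw [hconj, hb, charpoly_conj U _ hUUt hUtU, charpoly_diag]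
    exact symPoly_of_charpoly _ hB _ hcharB
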